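/- Let f : P → Q be a contraction between finite posets. If P is a forest, then Q is a forest. -/

import Mathlib

section Defs

variable {α β : Type*}

/-- `f` is monotone from the relation `r` to the relation `s`. -/
def Mono (r : α → α → Prop) (s : β → β → Prop) (f : α → β) : Prop :=
  ∀ a b, r a b → s (f a) (f b)

/-- A monotone map `f` is convex if whenever `f x ≤ w ≤ f y` there is a unique
`p` with `x ≤ p ≤ y` and `f p = w`. -/
def ConvexMap (r : α → α → Prop) (s : β → β → Prop) (f : α → β) : Prop :=
  Mono r s f ∧ ∀ x y w, s (f x) w → s w (f y) → ∃! p, r x p ∧ r p y ∧ f p = w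

/-- A subset `S` is connected (w.r.t. the order relation `r`) if any two of its
elements are joined by a finite zigzag of comparable pairs lying in `S`. -/
def ConnectedIn (r : α → α → Prop) (S : Set α) : Prop :=
  ∀ x ∈ S, ∀ y ∈ S,
    Relation.ReflTransGen (fun a b => a ∈ S ∧ b ∈ S ∧ (r a b ∨ r b a)) x y

/-- A subset `S` is order-convex w.r.t. `r`. -/
def OrdConvexIn (r : α → α → Prop) (S : Set α) : Prop :=
  ∀ x ∈ S, ∀ y ∈ S, ∀ z, r x z → r z y → z ∈ S

/-- The strict relation associated to `r`. -/
def LtRel (r : α → α → Prop) (a b : α) : Prop := r a b ∧ ¬ r b a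

/-- `b` covers `a` w.r.t. `r`. -/
def CovRel (r : α → α → Prop) (a b : α) : Prop :=
  LtRel r a b ∧ ∀ c, ¬ (LtRel r a c ∧ LtRel r c b)

/-- A contraction: a monotone surjection with connected convex fibres that lifts covers. -/
def IsContraction (r : α → α → Prop) (s : β → β → Prop) (f : α → β) : Prop :=
  Mono r s f ∧ Function.Surjective f ∧
  (∀ q, ConnectedIn r (f ⁻¹' {q}) ∧ OrdConvexIn r (f ⁻¹' {q})) ∧
  ∀ q q', CovRel s q q' → ∃ p p', CovRel r p p' ∧ f p = q ∧ f p' = q'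

/-- A collapse map: a monotone surjection which partially reflects the strict order. -/
def IsCollapse (r : α → α → Prop) (s : β → β → Prop) (f : α → β) : Prop :=
  Mono r s f ∧ Function.Surjective f ∧ ∀ x y, LtRel s (f x) (f y) → LtRel r x y

/-- `r` is a partial order relation. -/
def IsPartialOrderRel (r : α → α → Prop) : Prop :=
  (∀ a, r a a) ∧ (∀ a b c, r a b → r b c → r a c) ∧ (∀ a b, r a b → r b a → a = b)

/-- `r` is a preorder relation. -/
def IsPreorderRel (r : α → α → Prop) : Prop :=
  (∀ a, r a a) ∧ ∀ a b c, r a b → r b c → r a c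

/-- The symmetrization `x ∼ y` of a preorder relation. -/
def Sim (r : α → α → Prop) (x y : α) : Prop := r x y ∧ r y x

/-- The quotient preorder `T/T'`: the transitive closure of
`x R y ⟺ (x ≤_T y or y ≤_{T'} x)`. -/
def QuotRel (r r' : α → α → Prop) : α → α → Prop :=
  Relation.TransGen (fun x y => r x y ∨ r' y x)

/-- The identity-on-objects monotone map of preorders `T' → T` is admissible. -/
def Admissible (r' r : α → α → Prop) : Prop :=
  (∀ x y, r' x y → r x y) ∧
  (∀ Y : Set α, ConnectedIn r' Y → ∀ x ∈ Y, ∀ y ∈ Y, (r x y ↔ r' x y)) ∧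
  (∀ x y, Sim (QuotRel r r') x y ↔ Sim (QuotRel r' r') x y)

/-- The identity-on-objects monotone map of preorders `T → V` is a contraction of preorders. -/
def PreContraction (r v : α → α → Prop) : Prop :=
  (∀ x y, r x y → v x y) ∧
  (∀ x, ConnectedIn r {y | Sim v x y}) ∧
  ∀ a a', CovRel v a a' → ∃ t t', CovRel r t t' ∧ t = a ∧ t' = a'

/-- The setoid on `α` whose relation is the symmetrization of the preorder relation `r`. -/
def simSetoid (r : α → α → Prop) (h : IsPreorderRel r) : Setoid α where
  r := Sim r
  iseqv := ⟨fun x => ⟨h.1 x, h.1 x⟩, fun hxy => ⟨hxy.2, hxy.1⟩,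
    fun h1 h2 => ⟨h.2 _ _ _ h1.1 h2.1, h.2 _ _ _ h2.2 h1.2⟩⟩

/-- The partial order relation on the posetification (antisymmetrization) of a preorder. -/
def posetLe (r : α → α → Prop) (h : IsPreorderRel r) :
    Quotient (simSetoid r h) → Quotient (simSetoid r h) → Prop :=
  Quotient.lift₂ r (fun _ _ _ _ hx hy => propext
    ⟨fun hr => h.2 _ _ _ (h.2 _ _ _ hx.2 hr) hy.1,
     fun hr => h.2 _ _ _ (h.2 _ _ _ hx.1 hr) hy.2⟩)

/-- A tree: a poset with a greatest element in which every interval is linearly ordered. -/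
def IsTreeRel (r : α → α → Prop) : Prop :=
  (∃ t, ∀ p, r p t) ∧
  ∀ p p' z w, r p z → r z p' → r p w → r w p' → (r z w ∨ r w z)

/-- The connected component of `p` w.r.t. the order relation `r`. -/
def component (r : α → α → Prop) (p : α) : Set α :=
  {q | Relation.ReflTransGen (fun a b => r a b ∨ r b a) p q}

/-- A forest: a poset each of whose connected components is a tree. -/
def IsForestRel (r : α → α → Prop) : Prop :=
  ∀ p, IsTreeRel (fun a b : component r p => r a.1 b.1)

end Defs

section Proof6

open Relation

variable {P Q : Type*} [PartialOrder P] [PartialOrder Q] [Fintype P] [Fintype Q]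

lemma covRel_iff_covBy {a b : P} : CovRel (fun a b : P => a ≤ b) a b ↔ a ⋖ b := by
  constructor
  · rintro ⟨⟨h1, h2⟩, h3⟩
    exact ⟨lt_of_le_not_ge h1 h2, fun c hc1 hc2 =>
      h3 c ⟨⟨le_of_lt hc1, fun h => not_le_of_gt hc1 h⟩, ⟨le_of_lt hc2, fun h => not_le_of_gt hc2 h⟩⟩⟩
  · rintro ⟨h1, h2⟩
    exact ⟨⟨le_of_lt h1, fun h => not_le_of_gt h1 h⟩, fun c ⟨⟨ha, ha'⟩, ⟨hb, hb'⟩⟩ =>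
      h2 (lt_of_le_not_ge ha ha') (lt_of_le_not_ge hb hb')⟩

lemma le_reflTransGen_covBy {a b : P} (h : a ≤ b) : ReflTransGen (· ⋖ ·) a b := by
  classical
  letI : LocallyFiniteOrder P := Fintype.toLocallyFiniteOrder
  exact le_iff_reflTransGen_covBy.mp h

lemma mem_component_self (p : P) : p ∈ component (fun a b : P => a ≤ b) p :=
  ReflTransGen.refl

lemma mem_component_trans {x y z : P}
    (h : y ∈ component (fun a b : P => a ≤ b) x)
    (h' : z ∈ component (fun a b : P => a ≤ b) y) :
    z ∈ component (fun a b : P => a ≤ b) x :=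
  ReflTransGen.trans h h'

/-- In a forest, a nonempty connected set has a greatest element. -/
lemma connected_max (hP : IsForestRel (fun a b : P => a ≤ b)) (S : Set P)
    (hS : ConnectedIn (fun a b : P => a ≤ b) S) (hne : S.Nonempty) :
    ∃ m ∈ S, ∀ y ∈ S, y ≤ m := by
  obtain ⟨m, hmS, hmax⟩ := Set.Finite.exists_maximalFor id S (Set.toFinite S) hne
  refine ⟨m, hmS, fun y hy => ?_⟩
  have hzig := hS m hmS y hy
  clear hy
  induction hzig with
  | refl => rfl
  | @tail b c hmb hbc ih =>
    have hcS : c ∈ S := hbc.2.1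
    have hbm : b ≤ m := ih
    rcases hbc.2.2 with hle | hge
    · -- b ≤ c : use tree structure of component of m
      have hbcomp : b ∈ component (fun a b : P => a ≤ b) m :=
        ReflTransGen.mono (fun a b (h : a ∈ S ∧ b ∈ S ∧ (a ≤ b ∨ b ≤ a)) => h.2.2) _ _ hmb
      have hccomp : c ∈ component (fun a b : P => a ≤ b) m :=
        hbcomp.tail (Or.inl hle)
      obtain ⟨⟨t, htc⟩, ht⟩ := (hP m).1
      have hlin := (hP m).2 ⟨b, hbcomp⟩ ⟨t, htc⟩ ⟨c, hccomp⟩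
        ⟨m, mem_component_self m⟩ hle (ht ⟨c, hccomp⟩) hbm (ht ⟨m, _⟩)
      rcases hlin with h | h
      · exact h
      · exact hmax hcS h
    · exact le_trans hge ih
end Proof6

section Proof6b

open Relation

set_option linter.unusedSectionVars false

variable {P Q : Type*} [PartialOrder P] [PartialOrder Q] [Fintype P] [Fintype Q]
  {f : P → Q} (hf : IsContraction (fun a b : P => a ≤ b) (fun a b : Q => a ≤ b) f)

include hf

/-- Two points of the same fibre lie in the same component. -/
lemma fiber_comp {x y : P} (hxy : f x = f y) :
    y ∈ component (fun a b : P => a ≤ b) x := by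
  have h := (hf.2.2.1 (f x)).1 x rfl y hxy.symm
  exact ReflTransGen.mono (fun a b (hab : a ∈ f ⁻¹' {f x} ∧ b ∈ f ⁻¹' {f x} ∧ (a ≤ b ∨ b ≤ a)) => hab.2.2) _ _ h

/-- Lifting a single cover of `Q` along the fibre of its bottom. -/
lemma lift_cov_up {x : P} {a b : Q} (hab : a ⋖ b) (hx : f x = a) :
    ∃ y ∈ component (fun a b : P => a ≤ b) x, f y = b := by
  obtain ⟨p, p', hpp', hfp, hfp'⟩ := hf.2.2.2 a b (covRel_iff_covBy.mpr hab)
  have hcov : p ⋖ p' := covRel_iff_covBy.mp hpp'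
  have h1 : p ∈ component (fun a b : P => a ≤ b) x := fiber_comp hf (hx.trans hfp.symm)
  exact ⟨p', h1.tail (Or.inl hcov.le), hfp'⟩

lemma lift_cov_down {x : P} {a b : Q} (hab : a ⋖ b) (hx : f x = b) :
    ∃ y ∈ component (fun a b : P => a ≤ b) x, f y = a := by
  obtain ⟨p, p', hpp', hfp, hfp'⟩ := hf.2.2.2 a b (covRel_iff_covBy.mpr hab)
  have hcov : p ⋖ p' := covRel_iff_covBy.mp hpp'
  have h1 : p' ∈ component (fun a b : P => a ≤ b) x := fiber_comp hf (hx.trans hfp'.symm)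
  exact ⟨p, h1.tail (Or.inr hcov.le), hfp⟩

lemma lift_comparable {x : P} {a b : Q} (hx : f x = a) (hab : a ≤ b ∨ b ≤ a) :
    ∃ y ∈ component (fun a b : P => a ≤ b) x, f y = b := by
  rcases hab with hab | hba
  · have h := le_reflTransGen_covBy hab
    clear hab
    subst hx
    induction h with
    | refl => exact ⟨x, mem_component_self x, rfl⟩
    | @tail c d _ hcd ih =>
      obtain ⟨y, hy, hfy⟩ := ih
      obtain ⟨z, hz, hfz⟩ := lift_cov_up hf hcd hfy
      exact ⟨z, mem_component_trans hy hz, hfz⟩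
  · have h := le_reflTransGen_covBy hba
    clear hba
    induction h using Relation.ReflTransGen.head_induction_on with
    | refl => exact ⟨x, mem_component_self x, hx⟩
    | @head c d hcd _ ih =>
      obtain ⟨y, hy, hfy⟩ := ih
      obtain ⟨z, hz, hfz⟩ := lift_cov_down hf hcd hfy
      exact ⟨z, mem_component_trans hy hz, hfz⟩

/-- Every point of the component of `f x` is hit from the component of `x`. -/
lemma comp_surj {x : P} {q : Q} (hq : q ∈ component (fun a b : Q => a ≤ b) (f x)) :
    ∃ y ∈ component (fun a b : P => a ≤ b) x, f y = q := by
  induction hq with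
  | refl => exact ⟨x, mem_component_self x, rfl⟩
  | @tail b c _ hbc ih =>
    obtain ⟨y, hy, hfy⟩ := ih
    obtain ⟨z, hz, hfz⟩ := lift_comparable hf hfy hbc
    exact ⟨z, mem_component_trans hy hz, hfz⟩

end Proof6b

/-- the target of a contraction of finite posets whose source is a
forest is a forest. -/
theorem contraction_of_forest_is_forest {P Q : Type*} [PartialOrder P] [PartialOrder Q]
    [Fintype P] [Fintype Q]
    (f : P → Q)
    (hf : IsContraction (fun a b : P => a ≤ b) (fun a b : Q => a ≤ b) f)
    (hP : IsForestRel (fun a b : P => a ≤ b)) :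
    IsForestRel (fun a b : Q => a ≤ b) := by
  -- a monotone section `g` of `f`, sending `q` to the top of its fibre
  have hgex : ∀ q : Q, ∃ m : P, f m = q ∧ ∀ y, f y = q → y ≤ m := by
    intro q
    obtain ⟨x, hx⟩ := hf.2.1 q
    obtain ⟨m, hmS, hm⟩ := connected_max hP (f ⁻¹' {q}) ((hf.2.2.1 q).1) ⟨x, hx⟩
    exact ⟨m, hmS, fun y hy => hm y hy⟩
  choose g hg1 hg2 using hgex
  -- g is monotone
  have hgcov : ∀ a b : Q, a ⋖ b → g a ≤ g b := by
    intro a b hab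
    obtain ⟨p, p', hpp', hfp, hfp'⟩ := hf.2.2.2 a b (covRel_iff_covBy.mpr hab)
    have hcov : p ⋖ p' := covRel_iff_covBy.mp hpp'
    have hpga : p ≤ g a := hg2 a p hfp
    have hpgb : p' ≤ g b := hg2 b p' hfp'
    have hga_comp : g a ∈ component (fun a b : P => a ≤ b) p :=
      fiber_comp hf (hfp.trans (hg1 a).symm)
    have hp'_comp : p' ∈ component (fun a b : P => a ≤ b) p :=
      Relation.ReflTransGen.single (Or.inl hcov.le)
    obtain ⟨⟨t, htc⟩, ht⟩ := (hP p).1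
    have hlin := (hP p).2 ⟨p, mem_component_self p⟩ ⟨t, htc⟩ ⟨g a, hga_comp⟩
      ⟨p', hp'_comp⟩ hpga (ht ⟨g a, hga_comp⟩) hcov.le (ht ⟨p', hp'_comp⟩)
    rcases hlin with h | h
    · exact le_trans h hpgb
    · exfalso
      have : b ≤ a := by
        have := hf.1 p' (g a) h
        rwa [hfp', hg1 a] at this
      exact not_le_of_gt hab.lt this
  have hgmono : ∀ a b : Q, a ≤ b → g a ≤ g b := by
    intro a b hab
    have h := le_reflTransGen_covBy hab
    clear hab
    induction h with
    | refl => exact le_refl _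
    | @tail c d _ hcd ih => exact le_trans ih (hgcov c d hcd)
  -- the forest structure
  intro q0
  set p0 := g q0 with hp0
  have hfp0 : f p0 = q0 := hg1 q0
  -- every element of the component of q0 is hit from the component of p0
  have hhit : ∀ q ∈ component (fun a b : Q => a ≤ b) q0,
      ∃ y ∈ component (fun a b : P => a ≤ b) p0, f y = q := by
    intro q hq
    rw [← hfp0] at hq
    exact comp_surj hf hq
  -- g maps the component of q0 into the component of p0
  have hgcomp : ∀ q ∈ component (fun a b : Q => a ≤ b) q0,
      g q ∈ component (fun a b : P => a ≤ b) p0 := by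
    intro q hq
    have := Relation.ReflTransGen.lift (p := fun a b : P => a ≤ b ∨ b ≤ a) g
      (fun {a b} (hab : a ≤ b ∨ b ≤ a) => hab.imp (hgmono a b) (hgmono b a)) _ _ hq
    exact this
  constructor
  · -- greatest element
    obtain ⟨⟨t, htc⟩, ht⟩ := (hP p0).1
    have hftc : f t ∈ component (fun a b : Q => a ≤ b) q0 := by
      rw [← hfp0]
      exact Relation.ReflTransGen.lift (p := fun a b : Q => a ≤ b ∨ b ≤ a) f
        (fun {a b} (hab : a ≤ b ∨ b ≤ a) => hab.imp (hf.1 a b) (hf.1 b a)) _ _ htc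
    refine ⟨⟨f t, hftc⟩, ?_⟩
    rintro ⟨q, hq⟩
    obtain ⟨y, hy, hfy⟩ := hhit q hq
    have : y ≤ t := ht ⟨y, hy⟩
    simpa [hfy] using hf.1 y t this
  · -- intervals are chains
    rintro ⟨a, ha⟩ ⟨b, hb⟩ ⟨z, hz⟩ ⟨w, hw⟩ h1 h2 h3 h4
    simp only at h1 h2 h3 h4 ⊢
    have hlin := (hP p0).2 ⟨g a, hgcomp a ha⟩ ⟨g b, hgcomp b hb⟩
      ⟨g z, hgcomp z hz⟩ ⟨g w, hgcomp w hw⟩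
      (hgmono a z h1) (hgmono z b h2) (hgmono a w h3) (hgmono w b h4)
    rcases hlin with h | h
    · left
      have := hf.1 _ _ h
      rwa [hg1 z, hg1 w] at this
    · right
      have := hf.1 _ _ h
      rwa [hg1 z, hg1 w] at this
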